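/- The function H(x,z) = x²/(2z) + μz is a first integral of the reduced Raychaudhuri planar system ẋ = -(1/2)x² + μz², ż = -xz on the half-plane z > 0, and the planar system is Hamiltonian with respect to the symplectic form (1/z²) dx ∧ dz with Hamiltonian H. -/

import Mathlib

/-- H(x,z) = x²/(2z) + μz is a first integral of the reduced Raychaudhuri
planar system ẋ = -(1/2)x² + μz², ż = -xz on the half-plane z > 0:
f·∂ₓH + g·∂𝓏H = 0; moreover the system is Hamiltonian with respect to the
symplectic form (1/z²) dx ∧ dz, i.e. f = z²·∂𝓏H and g = -z²·∂ₓH. -/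
theorem reduced_raychaudhuri_hamiltonian (μ : ℝ) (x z : ℝ) (hz : 0 < z) :
    let f : ℝ := -(1 / 2) * x ^ 2 + μ * z ^ 2
    let g : ℝ := -(x * z)
    let Hx : ℝ := deriv (fun x' => x' ^ 2 / (2 * z) + μ * z) x
    let Hz : ℝ := deriv (fun z' => x ^ 2 / (2 * z') + μ * z') z
    f * Hx + g * Hz = 0 ∧ f = z ^ 2 * Hz ∧ g = -(z ^ 2) * Hx := by
  have hz0 : z ≠ 0 := ne_of_gt hz
  have h2z : (2 * z) ≠ 0 := by positivity
  have hHx : deriv (fun x' => x' ^ 2 / (2 * z) + μ * z) x = x / z := by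
    have : (fun x' : ℝ => x' ^ 2 / (2 * z) + μ * z)
        = fun x' => x' ^ 2 * (2 * z)⁻¹ + μ * z := by
      funext x'; rw [div_eq_mul_inv]
    rw [this, deriv_fun_add (by fun_prop) (by fun_prop), deriv_const,
      deriv_mul_const (by fun_prop), deriv_pow_field]
    field_simp; ring
  have hHz : deriv (fun z' => x ^ 2 / (2 * z') + μ * z') z
      = -(x ^ 2) / (2 * z ^ 2) + μ := by
    have h1 : HasDerivAt (fun z' : ℝ => x ^ 2 / (2 * z') + μ * z')
        (-(x ^ 2) / (2 * z ^ 2) + μ) z := by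
      have ha : HasDerivAt (fun z' : ℝ => x ^ 2 / (2 * z'))
          (-(x ^ 2) / (2 * z ^ 2)) z := by
        have h1 : HasDerivAt (fun z' : ℝ => 2 * z') 2 z := by
          simpa using (hasDerivAt_id z).const_mul 2
        have h2 := (h1.inv h2z).const_mul (x ^ 2)
        have heq : (fun z' : ℝ => x ^ 2 * (2 * z')⁻¹)
            = fun z' : ℝ => x ^ 2 / (2 * z') := by
          funext z'; rw [div_eq_mul_inv]
        simp only [Pi.inv_apply] at h2
        rw [heq] at h2
        refine h2.congr_deriv ?_
        field_simp
      have hb : HasDerivAt (fun z' : ℝ => μ * z') μ z := by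
        simpa using (hasDerivAt_id z).const_mul μ
      simpa using ha.fun_add hb
    exact h1.deriv
  intro f g Hx Hz
  simp only [f, g, Hx, Hz, hHx, hHz]
  refine ⟨?_, ?_, ?_⟩ <;> field_simp <;> ring
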